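/- For every α ≥ 1/2 and all real numbers s, t ≥ 0, one has the Young-type inequality s·t ≤ s·e^{s/(2α)} + 2α·t·(log(e+t))^{2α}. -/
import Mathlib


open Real

/-- For every `α ≥ 1/2` and all reals `s, t ≥ 0`, one has the
Young-type inequality `s·t ≤ s·e^{s/(2α)} + 2α·t·(log(e+t))^{2α}`. -/
theorem young_type_inequality_legendre (α s t : ℝ) (hα : 1/2 ≤ α)
    (hs : 0 ≤ s) (ht : 0 ≤ t) :
    s * t ≤ s * Real.exp (s / (2*α)) + 2*α * (t * Real.log (Real.exp 1 + t) ^ (2*α)) := by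
  have hαpos : (0:ℝ) < α := lt_of_lt_of_le (by norm_num) hα
  have h2α : (1:ℝ) ≤ 2*α := by linarith
  have hL : (1:ℝ) ≤ Real.log (Real.exp 1 + t) := by
    have := Real.log_le_log (Real.exp_pos 1) (le_add_of_nonneg_right ht)
    rwa [Real.log_exp] at this
  have hLpow : Real.log (Real.exp 1 + t) ≤ Real.log (Real.exp 1 + t) ^ (2*α) := by
    calc Real.log (Real.exp 1 + t) = Real.log (Real.exp 1 + t) ^ (1:ℝ) := by
          rw [Real.rpow_one]
      _ ≤ Real.log (Real.exp 1 + t) ^ (2*α) :=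
          Real.rpow_le_rpow_of_exponent_le hL h2α
  rcases le_or_gt t (Real.exp (s / (2*α))) with h | h
  · have h1 : s * t ≤ s * Real.exp (s / (2*α)) := mul_le_mul_of_nonneg_left h hs
    have h2 : 0 ≤ 2*α * (t * Real.log (Real.exp 1 + t) ^ (2*α)) := by
      apply mul_nonneg (by linarith)
      exact mul_nonneg ht (Real.rpow_nonneg (by linarith) _)
    linarith
  · have htpos : 0 < t := lt_trans (Real.exp_pos _) h
    have hslog : s / (2*α) < Real.log t := (Real.lt_log_iff_exp_lt htpos).2 h
    have hlt : Real.log t ≤ Real.log (Real.exp 1 + t) :=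
      Real.log_le_log htpos (by linarith [Real.exp_pos 1])
    have hs2 : s ≤ 2*α * Real.log (Real.exp 1 + t) := by
      have : s / (2*α) ≤ Real.log (Real.exp 1 + t) := le_of_lt (lt_of_lt_of_le hslog hlt)
      calc s = 2*α * (s / (2*α)) := by field_simp
        _ ≤ 2*α * Real.log (Real.exp 1 + t) := mul_le_mul_of_nonneg_left this (by linarith)
    have h1 : s * t ≤ 2*α * Real.log (Real.exp 1 + t) * t :=
      mul_le_mul_of_nonneg_right hs2 ht
    have h2 : 2*α * Real.log (Real.exp 1 + t) * t ≤
        2*α * (t * Real.log (Real.exp 1 + t) ^ (2*α)) := by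
      have := mul_le_mul_of_nonneg_left hLpow ht
      nlinarith
    have h3 : 0 ≤ s * Real.exp (s / (2*α)) :=
      mul_nonneg hs (Real.exp_pos _).le
    linarith
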